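/- Let η ≥ 0 and R_η(x) = η‖x‖_{ℓ¹} + (1/2)‖x‖_{ℓ²}². If a sequence (xⁿ) in ℓ² converges weakly to x* ∈ ℓ² and R_η(xⁿ) → R_η(x*) < ∞, then R_η(xⁿ − x*) → 0; in particular xⁿ → x* strongly in ℓ². -/

import Mathlib

noncomputable section

open Filter Topology
open scoped ENNReal

/-- `ℓ²(ℕ, ℝ)`. -/
abbrev ltwo : Type := lp (fun _ : ℕ => ℝ) 2

/-- The functional `R_η(x) = η‖x‖₁ + ½‖x‖₂²`, with values in `[0, ∞]`
(so `R_η(x) = +∞` if `η > 0` and `x ∉ ℓ¹`). -/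
noncomputable def Rext (η : ℝ) (x : ltwo) : ℝ≥0∞ :=
  ENNReal.ofReal η * ∑' i, ENNReal.ofReal |x i| + ENNReal.ofReal ((1 / 2) * ‖x‖ ^ 2)

/-- Fatou's lemma for `tsum` over `ℕ`. -/
lemma fatou_tsum {f : ℕ → ℕ → ℝ≥0∞} {g : ℕ → ℝ≥0∞}
    (h : ∀ i, Tendsto (fun n => f n i) atTop (𝓝 (g i))) :
    ∑' i, g i ≤ liminf (fun n => ∑' i, f n i) atTop := by
  have h1 : ∑' i, g i = ∫⁻ i, g i ∂(MeasureTheory.Measure.count) :=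
    (MeasureTheory.lintegral_count g).symm
  have h2 : (fun n => ∑' i, f n i)
      = fun n => ∫⁻ i, f n i ∂(MeasureTheory.Measure.count) := by
    funext n; exact (MeasureTheory.lintegral_count (f n)).symm
  rw [h1, h2]
  have h3 : (fun i => g i) = fun i => liminf (fun n => f n i) atTop := by
    funext i; exact ((h i).liminf_eq).symm
  rw [h3]
  exact MeasureTheory.lintegral_liminf_le fun n => measurable_of_countable _

/-- limsup bound: if `A n + B n → a + b` (finite) and `liminf B ≥ b`, then `limsup A ≤ a`. -/
lemma limsup_le_of_add {A B : ℕ → ℝ≥0∞} {a b : ℝ≥0∞} (ha : a ≠ ⊤) (hb : b ≠ ⊤)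
    (hab : Tendsto (fun n => A n + B n) atTop (𝓝 (a + b)))
    (hB : b ≤ liminf B atTop) :
    limsup A atTop ≤ a := by
  refine ENNReal.le_of_forall_pos_le_add fun ε hε _ => ?_
  have hε2 : (ε : ℝ≥0∞) / 2 ≠ 0 := by
    simp [ENNReal.div_eq_zero_iff, hε.ne']
  have habfin : a + b ≠ ⊤ := by simp [ha, hb]
  have h1 : ∀ᶠ n in atTop, A n + B n < a + b + (ε : ℝ≥0∞) / 2 := by
    refine hab.eventually_lt_const ?_
    exact ENNReal.lt_add_right habfin hε2
  have h2 : ∀ᶠ n in atTop, b ≤ B n + (ε : ℝ≥0∞) / 2 := by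
    rcases eq_or_ne b 0 with rfl | hb0
    · exact Eventually.of_forall fun _ => zero_le
    · have hlt : b - (ε : ℝ≥0∞) / 2 < liminf B atTop :=
        lt_of_lt_of_le (ENNReal.sub_lt_self hb hb0 hε2) hB
      filter_upwards [eventually_lt_of_lt_liminf hlt] with n hn
      exact tsub_le_iff_right.mp hn.le
  have h3 : ∀ᶠ n in atTop, A n ≤ a + ε := by
    filter_upwards [h1, h2] with n hn1 hn2
    have key : A n + b ≤ (a + ε) + b := by
      calc A n + b ≤ A n + (B n + (ε : ℝ≥0∞) / 2) := add_le_add le_rfl hn2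
        _ = (A n + B n) + (ε : ℝ≥0∞) / 2 := by ring
        _ ≤ (a + b + (ε : ℝ≥0∞) / 2) + (ε : ℝ≥0∞) / 2 := add_le_add hn1.le le_rfl
        _ = a + b + ((ε : ℝ≥0∞) / 2 + (ε : ℝ≥0∞) / 2) := by ring
        _ = (a + ε) + b := by rw [ENNReal.add_halves]; ring
    exact (ENNReal.add_le_add_iff_right hb).mp key
  exact limsup_le_of_le (by isBoundedDefault) h3

/-- Splitting a convergent sum of two lower-semicontinuous-limit sequences. -/
lemma split_tendsto {A B : ℕ → ℝ≥0∞} {a b : ℝ≥0∞} (ha : a ≠ ⊤) (hb : b ≠ ⊤)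
    (hab : Tendsto (fun n => A n + B n) atTop (𝓝 (a + b)))
    (hA : a ≤ liminf A atTop) (hB : b ≤ liminf B atTop) :
    Tendsto A atTop (𝓝 a) ∧ Tendsto B atTop (𝓝 b) := by
  have hab' : Tendsto (fun n => B n + A n) atTop (𝓝 (b + a)) := by
    simpa [add_comm] using hab
  exact ⟨tendsto_of_le_liminf_of_limsup_le hA (limsup_le_of_add ha hb hab hB),
    tendsto_of_le_liminf_of_limsup_le hB (limsup_le_of_add hb ha hab' hA)⟩

set_option maxHeartbeats 1000000 in
/-- If `xⁿ ⇀ x*` weakly in `ℓ²` and `R_η(xⁿ) → R_η(x*) < ∞`, then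
`R_η(xⁿ − x*) → 0`; in particular `xⁿ → x*` strongly in `ℓ²`. -/
theorem Rfunctional_weak_convergence_to_strong
    (η : ℝ) (hη : 0 ≤ η) (xs : ℕ → ltwo) (xstar : ltwo)
    (hweak : ∀ z : ltwo,
      Tendsto (fun n => (inner ℝ (xs n) z : ℝ)) atTop (nhds (inner ℝ xstar z)))
    (hfin : Rext η xstar < ⊤)
    (hR : Tendsto (fun n => Rext η (xs n)) atTop (nhds (Rext η xstar))) :
    Tendsto (fun n => Rext η (xs n - xstar)) atTop (nhds 0) ∧
      Tendsto xs atTop (nhds xstar) := by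
  classical
  set c : ℝ≥0∞ := ENNReal.ofReal η with hc
  have hcne : c ≠ ⊤ := ENNReal.ofReal_ne_top
  set S : ltwo → ℝ≥0∞ := fun x => ∑' i, ENNReal.ofReal |x i| with hS
  set A : ℕ → ℝ≥0∞ := fun n => c * S (xs n) with hA
  set B : ℕ → ℝ≥0∞ := fun n => ENNReal.ofReal ((1 / 2) * ‖xs n‖ ^ 2) with hB
  have haS : c * S xstar ≠ ⊤ ∧ ENNReal.ofReal ((1 / 2) * ‖xstar‖ ^ 2) ≠ ⊤ := by
    rw [Rext] at hfin
    exact ⟨(ENNReal.add_lt_top.mp hfin).1.ne, (ENNReal.add_lt_top.mp hfin).2.ne⟩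
  -- pointwise convergence
  have hpt : ∀ i, Tendsto (fun n => xs n i) atTop (𝓝 (xstar i)) := by
    intro i
    have := hweak (lp.single 2 i (1 : ℝ))
    simpa [lp.inner_single_right, RCLike.inner_apply, mul_one] using this
  have hptabs : ∀ i, Tendsto (fun n => ENNReal.ofReal |xs n i|) atTop
      (𝓝 (ENNReal.ofReal |xstar i|)) := fun i =>
    (ENNReal.continuous_ofReal.tendsto _).comp ((continuous_abs.tendsto _).comp (hpt i))
  -- liminf bound for A via Fatou
  have hAliminf : c * S xstar ≤ liminf A atTop := by
    have hfat := fatou_tsum (f := fun n i => c * ENNReal.ofReal |xs n i|)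
      (g := fun i => c * ENNReal.ofReal |xstar i|)
      (fun i => ENNReal.Tendsto.const_mul (hptabs i) (Or.inr hcne))
    simpa [hA, hS, ENNReal.tsum_mul_left] using hfat
  -- liminf bound for B via Cauchy-Schwarz / convexity
  have hin : Tendsto (fun n => (inner ℝ (xs n) xstar : ℝ)) atTop (𝓝 (‖xstar‖ ^ 2)) := by
    have := hweak xstar
    rwa [real_inner_self_eq_norm_sq] at this
  have hBliminf : ENNReal.ofReal ((1 / 2) * ‖xstar‖ ^ 2) ≤ liminf B atTop := by
    have hg : Tendsto (fun n => ENNReal.ofReal ((inner ℝ (xs n) xstar : ℝ) - (1/2) * ‖xstar‖ ^ 2))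
        atTop (𝓝 (ENNReal.ofReal ((1/2) * ‖xstar‖ ^ 2))) := by
      have h0 : Tendsto (fun n => (inner ℝ (xs n) xstar : ℝ) - (1/2) * ‖xstar‖ ^ 2) atTop
          (𝓝 ((1/2) * ‖xstar‖ ^ 2)) := by
        have := hin.sub_const ((1/2) * ‖xstar‖ ^ 2)
        convert this using 2
        ring
      exact (ENNReal.continuous_ofReal.tendsto _).comp h0
    have hle : ∀ n, ENNReal.ofReal ((inner ℝ (xs n) xstar : ℝ) - (1/2) * ‖xstar‖ ^ 2) ≤ B n := by
      intro n
      apply ENNReal.ofReal_le_ofReal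
      have h1 : ‖xs n - xstar‖ ^ 2 = ‖xs n‖ ^ 2 - 2 * (inner ℝ (xs n) xstar : ℝ) + ‖xstar‖ ^ 2 :=
        norm_sub_sq_real (xs n) xstar
      have h2 : (0:ℝ) ≤ ‖xs n - xstar‖ ^ 2 := sq_nonneg _
      nlinarith
    calc ENNReal.ofReal ((1/2) * ‖xstar‖ ^ 2)
        = liminf (fun n => ENNReal.ofReal ((inner ℝ (xs n) xstar : ℝ) - (1/2) * ‖xstar‖ ^ 2)) atTop :=
          hg.liminf_eq.symm
      _ ≤ liminf B atTop := liminf_le_liminf (Eventually.of_forall hle)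
  -- split the convergence of Rext into its two parts
  have hRsplit : Tendsto (fun n => A n + B n) atTop
      (𝓝 (c * S xstar + ENNReal.ofReal ((1/2) * ‖xstar‖ ^ 2))) := hR
  obtain ⟨hAt, hBt⟩ := split_tendsto haS.1 haS.2 hRsplit hAliminf hBliminf
  -- norm convergence and strong convergence
  have hN : Tendsto (fun n => (1/2) * ‖xs n‖ ^ 2) atTop (𝓝 ((1/2) * ‖xstar‖ ^ 2)) := by
    have := (ENNReal.tendsto_toReal haS.2).comp hBt
    simpa [Function.comp_def, hB, ENNReal.toReal_ofReal,
      mul_nonneg (by norm_num : (0:ℝ) ≤ 1/2) (sq_nonneg _)] using this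
  have hsubsq : Tendsto (fun n => ‖xs n - xstar‖ ^ 2) atTop (𝓝 0) := by
    have h1 : Tendsto (fun n => 2 * ((1/2) * ‖xs n‖ ^ 2) - 2 * (inner ℝ (xs n) xstar : ℝ)
        + ‖xstar‖ ^ 2) atTop (𝓝 (2 * ((1/2) * ‖xstar‖ ^ 2) - 2 * ‖xstar‖ ^ 2 + ‖xstar‖ ^ 2)) :=
      ((hN.const_mul 2).sub (hin.const_mul 2)).add_const _
    have h2 : (2 * ((1/2) * ‖xstar‖ ^ 2) - 2 * ‖xstar‖ ^ 2 + ‖xstar‖ ^ 2 : ℝ) = 0 := by ring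
    rw [h2] at h1
    convert h1 using 2 with n
    rw [norm_sub_sq_real]
    ring
  have hnorm : Tendsto (fun n => ‖xs n - xstar‖) atTop (𝓝 0) := by
    have := (Real.continuous_sqrt.tendsto 0).comp hsubsq
    simpa [Function.comp_def, Real.sqrt_sq (norm_nonneg _)] using this
  have hstrong : Tendsto xs atTop (𝓝 xstar) := tendsto_iff_norm_sub_tendsto_zero.mpr hnorm
  -- second term of Rext of the difference tends to zero
  have hB2 : Tendsto (fun n => ENNReal.ofReal ((1/2) * ‖xs n - xstar‖ ^ 2)) atTop (𝓝 0) := by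
    have h0 : Tendsto (fun n => (1/2) * ‖xs n - xstar‖ ^ 2) atTop (𝓝 ((1/2) * 0)) :=
      hsubsq.const_mul _
    have := (ENNReal.continuous_ofReal.tendsto _).comp h0
    simpa only [Function.comp_def, mul_zero, ENNReal.ofReal_zero] using this
  -- first term of Rext of the difference tends to zero
  have hD : Tendsto (fun n => c * ∑' i, ENNReal.ofReal |xs n i - xstar i|) atTop (𝓝 0) := by
    rcases eq_or_lt_of_le hη with h0 | hpos
    · have : c = 0 := by simp [hc, ← h0]
      simp [this]
    · have hc0 : c ≠ 0 := by
        simp [hc, ENNReal.ofReal_eq_zero, not_le, hpos]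
      -- S (xs n) → S xstar, with S xstar finite
      have hSfin : S xstar ≠ ⊤ := by
        intro h
        apply haS.1
        rw [h, ENNReal.mul_top hc0]
      have hSt : Tendsto (fun n => S (xs n)) atTop (𝓝 (S xstar)) := by
        have := ENNReal.Tendsto.const_mul (a := c⁻¹) hAt (Or.inr (by simp [hc0]))
        simpa [hA, ← mul_assoc, ENNReal.inv_mul_cancel hc0 hcne, one_mul] using this
      -- Brezis–Lieb type argument in ℓ¹
      set D : ℕ → ℝ≥0∞ := fun n => ∑' i, ENNReal.ofReal |xs n i - xstar i| with hDdef
      set G : ℕ → ℝ≥0∞ := fun n =>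
        ∑' i, ENNReal.ofReal (|xs n i| + |xstar i| - |xs n i - xstar i|) with hGdef
      have hsum : ∀ n, D n + G n = S (xs n) + S xstar := by
        intro n
        rw [hDdef, hGdef, hS, ← ENNReal.tsum_add, ← ENNReal.tsum_add]
        congr 1
        funext i
        rw [← ENNReal.ofReal_add (abs_nonneg _) (by
          have := abs_sub_abs_le_abs_sub (xs n i) (xstar i); linarith [abs_add_le (xs n i - xstar i) (xstar i), abs_sub (xs n i) (xstar i)] ), ← ENNReal.ofReal_add (abs_nonneg _) (abs_nonneg _)]
        congr 1
        ring
      have hGlim : ∀ i, Tendsto (fun n => ENNReal.ofReal (|xs n i| + |xstar i| - |xs n i - xstar i|))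
          atTop (𝓝 (ENNReal.ofReal (|xstar i| + |xstar i|))) := by
        intro i
        have h0 : Tendsto (fun n => |xs n i| + |xstar i| - |xs n i - xstar i|) atTop
            (𝓝 (|xstar i| + |xstar i|)) := by
          have h1 : Tendsto (fun n => |xs n i|) atTop (𝓝 |xstar i|) :=
            (continuous_abs.tendsto _).comp (hpt i)
          have h2 : Tendsto (fun n => |xs n i - xstar i|) atTop (𝓝 0) := by
            have := ((hpt i).sub_const (xstar i)).abs
            simpa using this
          have := (h1.add_const |xstar i|).sub h2
          simpa using this
        exact (ENNReal.continuous_ofReal.tendsto _).comp h0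
      have hGliminf : S xstar + S xstar ≤ liminf G atTop := by
        have hfat := fatou_tsum (f := fun n i =>
            ENNReal.ofReal (|xs n i| + |xstar i| - |xs n i - xstar i|))
          (g := fun i => ENNReal.ofReal (|xstar i| + |xstar i|)) hGlim
        have heq : ∑' i, ENNReal.ofReal (|xstar i| + |xstar i|) = S xstar + S xstar := by
          rw [hS, ← ENNReal.tsum_add]
          congr 1
          funext i
          rw [← ENNReal.ofReal_add (abs_nonneg _) (abs_nonneg _)]
        rw [← heq]
        exact hfat
      have hDG : Tendsto (fun n => D n + G n) atTop (𝓝 (0 + (S xstar + S xstar))) := by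
        have : Tendsto (fun n => S (xs n) + S xstar) atTop (𝓝 (S xstar + S xstar)) :=
          hSt.add_const _
        rw [zero_add]
        simpa [hsum] using this
      have hbfin : S xstar + S xstar ≠ ⊤ := by simp [hSfin]
      obtain ⟨hDt, -⟩ := split_tendsto (by simp) hbfin hDG zero_le hGliminf
      have := ENNReal.Tendsto.const_mul (a := c) hDt (Or.inr hcne)
      simpa [hDdef] using this
  -- assemble
  refine ⟨?_, hstrong⟩
  have hfinal := hD.add hB2
  rw [add_zero] at hfinal
  convert hfinal using 2 with n
  rfl
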